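/- For any two real m×n matrices X and Y, ‖σ(X) − σ(Y)‖ ≤ ‖X − Y‖, where the left norm is the Euclidean norm in ℝⁿ and the right norm is the Frobenius norm; i.e., the singular value map σ is 1-Lipschitz. -/

import Mathlib

open Filter Topology Matrix

noncomputable section

abbrev Mat (m n : ℕ) := Matrix (Fin m) (Fin n) ℝ

namespace Paper

/-- Frobenius (trace) inner product on real matrices. -/
def finner {m n : ℕ} (X Y : Mat m n) : ℝ := ∑ i, ∑ j, X i j * Y i j

/-- Frobenius norm. -/
def fnorm {m n : ℕ} (X : Mat m n) : ℝ := Real.sqrt (finner X X)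

/-- Euclidean inner product on `ℝⁿ`. -/
def vinner {n : ℕ} (x y : Fin n → ℝ) : ℝ := ∑ i, x i * y i

/-- Euclidean norm on `ℝⁿ`. -/
def vnorm {n : ℕ} (x : Fin n → ℝ) : ℝ := Real.sqrt (vinner x x)

/-- Eigenvalues of a real symmetric matrix, arranged in nonincreasing order. -/
def eigs {k : ℕ} (A : Matrix (Fin k) (Fin k) ℝ) (hA : A.IsHermitian) : Fin k → ℝ :=
  fun i => hA.eigenvalues (Tuple.sort (fun j => -(hA.eigenvalues j)) i)

/-- Singular values of a real `m × n` matrix, arranged in nonincreasing order. -/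
def svals {m n : ℕ} (X : Mat m n) : Fin n → ℝ :=
  fun i => Real.sqrt (eigs _ (Matrix.isHermitian_conjTranspose_mul_self X) i)

/-- The `m × n` matrix with `x` on the diagonal and zeros elsewhere. -/
def mdiag {m n : ℕ} (x : Fin n → ℝ) : Mat m n :=
  fun i j => if (i : ℕ) = (j : ℕ) then x j else 0

/-- The symmetric block matrix `B(X) = [[0, X], [Xᵀ, 0]]`, reindexed over `Fin (m+n)`. -/
def bmat {m n : ℕ} (X : Mat m n) : Matrix (Fin (m + n)) (Fin (m + n)) ℝ :=
  Matrix.reindex finSumFinEquiv finSumFinEquiv (Matrix.fromBlocks 0 X Xᵀ 0)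

lemma bmat_isHermitian {m n : ℕ} (X : Mat m n) : (bmat X).IsHermitian := by
  rw [Matrix.IsHermitian]
  ext i j
  simp only [bmat, Matrix.conjTranspose_apply, Matrix.reindex_apply, Matrix.submatrix_apply,
    star_trivial]
  rcases hi : finSumFinEquiv.symm i with a | a <;> rcases hj : finSumFinEquiv.symm j with b | b <;>
    simp [Matrix.fromBlocks, Matrix.transpose_apply]

/-- Eigenvalues of `B(X)` in nonincreasing order. -/
def beigs {m n : ℕ} (X : Mat m n) : Fin (m + n) → ℝ :=
  eigs (bmat X) (bmat_isHermitian X)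

/-- `Q` is a signed permutation matrix. -/
def IsSignedPerm {n : ℕ} (Q : Matrix (Fin n) (Fin n) ℝ) : Prop :=
  ∃ (e : Equiv.Perm (Fin n)) (s : Fin n → ℝ), (∀ i, s i = 1 ∨ s i = -1) ∧
    ∀ i j, Q i j = if j = e i then s i else 0

/-- A set of vectors invariant under all signed permutations. -/
def AbsSymSet {n : ℕ} (K : Set (Fin n → ℝ)) : Prop :=
  ∀ Q, IsSignedPerm Q → ∀ x ∈ K, Q.mulVec x ∈ K

/-- An extended-real-valued absolutely symmetric function. -/
def AbsSymFun {n : ℕ} (f : (Fin n → ℝ) → EReal) : Prop :=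
  ∀ Q, IsSignedPerm Q → ∀ x, f (Q.mulVec x) = f x

/-- Euclidean distance from a point to a set in `ℝⁿ`. -/
def vdist {n : ℕ} (x : Fin n → ℝ) (K : Set (Fin n → ℝ)) : ℝ :=
  sInf ((fun y => vnorm (x - y)) '' K)

/-- Frobenius distance from a matrix to a set of matrices. -/
def mdist {m n : ℕ} (X : Mat m n) (Γ : Set (Mat m n)) : ℝ :=
  sInf ((fun Y => fnorm (X - Y)) '' Γ)

section Variational

variable {E : Type*} [AddCommGroup E] [Module ℝ E] [TopologicalSpace E]

/-- The subderivative `dg(x)(w) = liminf_{t↓0, w'→w} (g(x+tw') - g(x))/t`. -/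
def subderiv (g : E → EReal) (x w : E) : EReal :=
  liminf (fun p : ℝ × E => ((p.1⁻¹ : ℝ) : EReal) * (g (x + p.1 • p.2) - g x))
    ((𝓝[>] (0 : ℝ)) ×ˢ 𝓝 w)

/-- The second-order difference quotient `Δ²_τ g(x | v)(w)`. -/
def secondQuot (ip : E → E → ℝ) (g : E → EReal) (x v : E) (τ : ℝ) (w : E) : EReal :=
  ((2 / τ ^ 2 : ℝ) : EReal) * (g (x + τ • w) - g x - ((τ * ip v w : ℝ) : EReal))

/-- The second subderivative `d²g(x | v)(w)`. -/
def secondSubderiv (ip : E → E → ℝ) (g : E → EReal) (x v w : E) : EReal :=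
  liminf (fun p : ℝ × E => secondQuot ip g x v p.1 p.2) ((𝓝[>] (0 : ℝ)) ×ˢ 𝓝 w)

/-- The parabolic difference quotient `Δ²_τ g(x)(w | z)`. -/
def parabQuot (g : E → EReal) (x w : E) (τ : ℝ) (z : E) : EReal :=
  ((2 / τ ^ 2 : ℝ) : EReal) *
    (g (x + τ • w + (τ ^ 2 / 2) • z) - g x - ((τ : ℝ) : EReal) * subderiv g x w)

/-- The parabolic subderivative `d²g(x)(w | z)`. -/
def parabolicSubderiv (g : E → EReal) (x w z : E) : EReal :=
  liminf (fun p : ℝ × E => parabQuot g x w p.1 p.2) ((𝓝[>] (0 : ℝ)) ×ˢ 𝓝 z)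

/-- Parabolic epi-differentiability of `g` at `x` for `w`. -/
def ParabEpiDiffAt (g : E → EReal) (x w : E) : Prop :=
  (∃ z, parabolicSubderiv g x w z < ⊤) ∧
  ∀ z : E, ∀ t : ℕ → ℝ, (∀ k, 0 < t k) → Tendsto t atTop (𝓝 0) →
    ∃ zk : ℕ → E, Tendsto zk atTop (𝓝 z) ∧
      Tendsto (fun k => parabQuot g x w (t k) (zk k)) atTop (𝓝 (parabolicSubderiv g x w z))

/-- The (contingent) tangent cone to `C` at `x`. -/
def tangentConeOf (C : Set E) (x : E) : Set E :=
  {w | ∃ t : ℕ → ℝ, ∃ w' : ℕ → E, (∀ k, 0 < t k) ∧ Tendsto t atTop (𝓝 0) ∧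
    Tendsto w' atTop (𝓝 w) ∧ ∀ k, x + t k • w' k ∈ C}

/-- The second-order tangent set to `C` at `x` for `w`. -/
def tangentCone2Of (C : Set E) (x w : E) : Set E :=
  {u | ∃ t : ℕ → ℝ, ∃ u' : ℕ → E, (∀ k, 0 < t k) ∧ Tendsto t atTop (𝓝 0) ∧
    Tendsto u' atTop (𝓝 u) ∧ ∀ k, x + t k • w + (t k ^ 2 / 2) • u' k ∈ C}

/-- Parabolic derivability of the set `C` at `x` for `w`. -/
def ParabolicallyDerivable (C : Set E) (x w : E) : Prop :=
  (tangentCone2Of C x w).Nonempty ∧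
  ∀ u ∈ tangentCone2Of C x w, ∃ ε > (0 : ℝ), ∃ ξ : ℝ → E,
    (∀ t ∈ Set.Icc (0 : ℝ) ε, ξ t ∈ C) ∧ ξ 0 = x ∧
    Tendsto (fun t : ℝ => t⁻¹ • (ξ t - x)) (𝓝[>] 0) (𝓝 w) ∧
    Tendsto (fun t : ℝ => (2 / t ^ 2) • (ξ t - x - t • w)) (𝓝[>] 0) (𝓝 u)

/-- The convex subdifferential of `g` at `x` (w.r.t. the pairing `ip`). -/
def convSubdiff (ip : E → E → ℝ) (g : E → EReal) (x : E) : Set E :=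
  {v | ∀ y, ((ip v (y - x) : ℝ) : EReal) + g x ≤ g y}

/-- Convexity for extended-real-valued functions. -/
def ConvexEReal (g : E → EReal) : Prop :=
  ∀ x y : E, ∀ t : ℝ, 0 ≤ t → t ≤ 1 →
    g (t • x + (1 - t) • y) ≤ ((t : ℝ) : EReal) * g x + ((1 - t : ℝ) : EReal) * g y

end Variational

/-- Local Lipschitz continuity of `f` relative to its domain (everywhere on the domain). -/
def LocLipRelDom {n : ℕ} (f : (Fin n → ℝ) → EReal) : Prop :=
  ∀ x, f x ≠ ⊤ → ∃ l ≥ (0 : ℝ), ∃ U ∈ 𝓝 x, ∀ y ∈ U, ∀ z ∈ U, f y ≠ ⊤ → f z ≠ ⊤ →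
    |(f y).toReal - (f z).toReal| ≤ l * vnorm (y - z)

/-- The columns of `U` with indices `r, r+1, …, k-1`. -/
def colsFrom {k : ℕ} (r : ℕ) (U : Matrix (Fin k) (Fin k) ℝ) :
    Matrix (Fin k) (Fin (k - r)) ℝ :=
  fun i j => U i ⟨r + (j : ℕ), by have := j.isLt; omega⟩

/-- The first `r` columns of `U`. -/
def firstCols {k : ℕ} (r : ℕ) (h : r ≤ k) (U : Matrix (Fin k) (Fin k) ℝ) :
    Matrix (Fin k) (Fin r) ℝ :=
  fun i j => U i (Fin.castLE h j)

/-- The submatrix of `M` with rows `a ≤ · < b` and columns `c ≤ · < d`. -/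
def subBlock {p q : ℕ} (M : Matrix (Fin p) (Fin q) ℝ) (a b c d : ℕ)
    (h1 : b ≤ p) (h2 : d ≤ q) : Matrix (Fin (b - a)) (Fin (d - c)) ℝ :=
  fun i j => M ⟨a + (i : ℕ), by have := i.isLt; omega⟩ ⟨c + (j : ℕ), by have := j.isLt; omega⟩

/-- Nuclear norm: the sum of all singular values. -/
def nucNorm {m n : ℕ} (A : Mat m n) : ℝ := ∑ j, svals A j

/-- `Ψₙ(X) = σ_{r+1}(X) + ⋯ + σ_n(X)`, the sum of the `n - r` smallest singular values. -/
def psiN {m n : ℕ} (r : ℕ) (X : Mat m n) : ℝ :=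
  ∑ s : Fin n, if r ≤ (s : ℕ) then svals X s else 0

/-- The regular (Fréchet) subdifferential of a real-valued function on matrices. -/
def regSubdiff {m n : ℕ} (g : Mat m n → ℝ) (X : Mat m n) : Set (Mat m n) :=
  {V | ∀ ε > (0 : ℝ), ∀ᶠ Y in 𝓝 X, g X + finner V (Y - X) - ε * fnorm (Y - X) ≤ g Y}

/-- Two square matrices admit a simultaneous ordered spectral decomposition. -/
def SimSpec {k : ℕ} (A B : Matrix (Fin k) (Fin k) ℝ) : Prop :=
  ∃ (W : Matrix (Fin k) (Fin k) ℝ) (a b : Fin k → ℝ), Wᵀ * W = 1 ∧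
    Antitone a ∧ Antitone b ∧
    A = W * Matrix.diagonal a * Wᵀ ∧ B = W * Matrix.diagonal b * Wᵀ

/-- Two rectangular matrices admit a simultaneous ordered singular value decomposition. -/
def SimSVD {p q : ℕ} (A B : Matrix (Fin p) (Fin q) ℝ) : Prop :=
  ∃ (U : Matrix (Fin p) (Fin p) ℝ) (V : Matrix (Fin q) (Fin q) ℝ)
    (a b : Fin q → ℝ), Uᵀ * U = 1 ∧ Vᵀ * V = 1 ∧
    Antitone a ∧ Antitone b ∧ (∀ j, 0 ≤ a j) ∧ (∀ j, 0 ≤ b j) ∧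
    A = U * mdiag (m := p) a * Vᵀ ∧ B = U * mdiag (m := p) b * Vᵀ

end Paper

open Paper

section MirskyAux
open Finset
namespace Paper


lemma eigs_antitone {k : ℕ} (A : Matrix (Fin k) (Fin k) ℝ) (hA : A.IsHermitian) :
    Antitone (eigs A hA) := by
  intro i j hij
  have := Tuple.monotone_sort (fun j => -(hA.eigenvalues j)) hij
  simp only [Function.comp_apply] at this
  simpa [eigs] using this

lemma sum_comp_eigs {k : ℕ} (A : Matrix (Fin k) (Fin k) ℝ) (hA : A.IsHermitian)
    (g : ℝ → ℝ) : ∑ i, g (eigs A hA i) = ∑ i, g (hA.eigenvalues i) :=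
  Equiv.sum_comp (Tuple.sort (fun j => -(hA.eigenvalues j))) (fun i => g (hA.eigenvalues i))

/-- Spectral decomposition with sorted eigenvalues. -/
lemma exists_eigendecomp {k : ℕ} (A : Matrix (Fin k) (Fin k) ℝ) (hA : A.IsHermitian) :
    ∃ V : Matrix (Fin k) (Fin k) ℝ, Vᵀ * V = 1 ∧ V * Vᵀ = 1 ∧
      A = V * Matrix.diagonal (eigs A hA) * Vᵀ := by
  classical
  set W : Matrix (Fin k) (Fin k) ℝ := (hA.eigenvectorUnitary : Matrix (Fin k) (Fin k) ℝ) with hW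
  have hWmem := hA.eigenvectorUnitary.2
  have hWortho : Wᵀ * W = 1 := by
    have := (Matrix.mem_unitaryGroup_iff'.mp hWmem)
    simpa [Matrix.star_eq_conjTranspose, Matrix.conjTranspose_eq_transpose_of_trivial] using this
  have hspec : A = W * Matrix.diagonal hA.eigenvalues * Wᵀ := by
    have := hA.spectral_theorem
    simpa [Matrix.star_eq_conjTranspose, Matrix.conjTranspose_eq_transpose_of_trivial,
      Function.comp] using this
  set e := Tuple.sort (fun j => -(hA.eigenvalues j)) with he
  refine ⟨W.submatrix id e, ?_, ?_, ?_⟩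
  · ext a b
    rw [Matrix.mul_apply]
    simp only [Matrix.transpose_apply, Matrix.submatrix_apply, id]
    have : ∑ i, W i (e a) * W i (e b) = (Wᵀ * W) (e a) (e b) := by
      rw [Matrix.mul_apply]; simp [Matrix.transpose_apply]
    rw [this, hWortho]
    simp [Matrix.one_apply, EmbeddingLike.apply_eq_iff_eq]
  · rw [← mul_eq_one_comm]
    ext a b
    rw [Matrix.mul_apply]
    simp only [Matrix.transpose_apply, Matrix.submatrix_apply, id]
    have : ∑ i, W i (e a) * W i (e b) = (Wᵀ * W) (e a) (e b) := by
      rw [Matrix.mul_apply]; simp [Matrix.transpose_apply]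
    rw [this, hWortho]
    simp [Matrix.one_apply, EmbeddingLike.apply_eq_iff_eq]
  · have key : ∀ (M : Matrix (Fin k) (Fin k) ℝ) (d : Fin k → ℝ) (i j : Fin k),
        (M * Matrix.diagonal d * Mᵀ) i j = ∑ a, M i a * d a * M j a := by
      intro M d i j
      rw [Matrix.mul_apply]
      exact Finset.sum_congr rfl fun a _ => by
        rw [Matrix.mul_diagonal, Matrix.transpose_apply]
    ext i j
    conv_lhs => rw [hspec]
    rw [key, key]
    rw [← Equiv.sum_comp e (fun a => W i a * hA.eigenvalues a * W j a)]
    exact Finset.sum_congr rfl fun a _ => by simp [eigs, Matrix.submatrix_apply, he]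

lemma eigs_nonneg_psd {m n : ℕ} (X : Mat m n) (i : Fin n) :
    0 ≤ eigs _ (Matrix.isHermitian_conjTranspose_mul_self X) i := by
  have h := (Matrix.posSemidef_conjTranspose_mul_self X).eigenvalues_nonneg
  exact h _

lemma svals_antitone {m n : ℕ} (X : Mat m n) : Antitone (svals X) := by
  intro i j hij
  exact Real.sqrt_le_sqrt (eigs_antitone _ _ hij)

lemma svals_nonneg {m n : ℕ} (X : Mat m n) (i : Fin n) : 0 ≤ svals X i :=
  Real.sqrt_nonneg _

lemma svals_mul_self {m n : ℕ} (X : Mat m n) (i : Fin n) :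
    svals X i * svals X i = eigs _ (Matrix.isHermitian_conjTranspose_mul_self X) i :=
  Real.mul_self_sqrt (eigs_nonneg_psd X i)

lemma sum_sq_svals {m n : ℕ} (X : Mat m n) :
    ∑ i, svals X i * svals X i = finner X X := by
  have h1 : ∀ i, svals X i * svals X i
      = eigs _ (Matrix.isHermitian_conjTranspose_mul_self X) i := svals_mul_self X
  rw [Finset.sum_congr rfl fun i _ => h1 i]
  rw [sum_comp_eigs _ _ (fun t => t)]
  -- ∑ eigenvalues = trace
  obtain ⟨V, hV1, hV2, hspec⟩ := exists_eigendecomp _ (Matrix.isHermitian_conjTranspose_mul_self X)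
  have htr : Matrix.trace (Xᴴ * X) = ∑ i, eigs _ (Matrix.isHermitian_conjTranspose_mul_self X) i := by
    conv_lhs => rw [hspec]
    rw [Matrix.trace_mul_cycle, hV1, Matrix.one_mul, Matrix.trace_diagonal]
  rw [sum_comp_eigs _ (Matrix.isHermitian_conjTranspose_mul_self X) (fun t => t)] at htr
  rw [← htr]
  rw [Matrix.trace]
  rw [finner, Finset.sum_comm]
  refine Finset.sum_congr rfl fun j _ => ?_
  rw [Matrix.diag_apply, Matrix.mul_apply]
  refine Finset.sum_congr rfl fun i _ => ?_
  simp [Matrix.conjTranspose_apply]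

end Paper

namespace Paper
open RealInnerProductSpace

lemma inner_eq_dot {m : ℕ} (x y : EuclideanSpace ℝ (Fin m)) :
    (inner ℝ x y : ℝ) = dotProduct (x : Fin m → ℝ) y := by
  rw [PiLp.inner_apply]; simp [RCLike.inner_apply, dotProduct]
  exact Finset.sum_congr rfl fun _ _ => mul_comm _ _

lemma exists_svd {m n : ℕ} (hmn : n ≤ m) (X : Mat m n) :
    ∃ (U : Matrix (Fin m) (Fin m) ℝ) (V : Matrix (Fin n) (Fin n) ℝ),
      Uᵀ * U = 1 ∧ Vᵀ * V = 1 ∧ V * Vᵀ = 1 ∧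
      ∀ j : Fin n, X *ᵥ (fun t => V t j) = fun i => svals X j * U i (Fin.castLE hmn j) := by
  classical
  set hA := Matrix.isHermitian_conjTranspose_mul_self X with hhA
  obtain ⟨V, hV1, hV2, hspec⟩ := exists_eigendecomp _ hA
  set μ : Fin n → ℝ := eigs _ hA with hμ
  set σ : Fin n → ℝ := svals X with hσ
  have hσsq : ∀ j, σ j * σ j = μ j := fun j => svals_mul_self X j
  set vcol : Fin n → (Fin n → ℝ) := fun j => (fun t => V t j) with hvcol
  have hAV : (Xᴴ * X) * V = V * Matrix.diagonal μ := by
    rw [hspec, Matrix.mul_assoc, Matrix.mul_assoc, hV1, Matrix.mul_one]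
  have hcoleig : ∀ j, (Xᴴ * X) *ᵥ vcol j = fun i => μ j * V i j := by
    intro j; funext i
    have h1 : ((Xᴴ * X) *ᵥ vcol j) i = ((Xᴴ * X) * V) i j := by
      rw [Matrix.mul_apply, Matrix.mulVec, dotProduct]
    rw [h1, hAV, Matrix.mul_diagonal, mul_comm]
  have hdot : ∀ a b, dotProduct (X *ᵥ vcol a) (X *ᵥ vcol b)
      = μ b * (if a = b then 1 else 0) := by
    intro a b
    have h2 : dotProduct (X *ᵥ vcol a) (X *ᵥ vcol b)
        = dotProduct (vcol a) ((Xᴴ * X) *ᵥ vcol b) := by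
      rw [← Matrix.mulVec_mulVec, Matrix.dotProduct_mulVec (vcol a),
        Matrix.conjTranspose_eq_transpose_of_trivial, Matrix.vecMul_transpose]
    rw [h2, hcoleig b]
    have h3 : dotProduct (vcol a) (fun i => μ b * V i b)
        = μ b * dotProduct (vcol a) (vcol b) := by
      rw [dotProduct, dotProduct, Finset.mul_sum]
      exact Finset.sum_congr rfl fun t _ => by ring
    rw [h3]
    have h4 : dotProduct (vcol a) (vcol b) = (Vᵀ * V) a b := by
      rw [Matrix.mul_apply, dotProduct]
      exact Finset.sum_congr rfl fun t _ => by simp [Matrix.transpose_apply, hvcol]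
    rw [h4, hV1, Matrix.one_apply]
  set w : Fin m → EuclideanSpace ℝ (Fin m) := fun p =>
    if h : (p : ℕ) < n then (σ ⟨p, h⟩)⁻¹ • (WithLp.toLp 2 (X *ᵥ vcol ⟨p, h⟩ : Fin m → ℝ) :
      EuclideanSpace ℝ (Fin m)) else 0 with hw
  set s : Set (Fin m) := {p | ∃ h : (p : ℕ) < n, σ ⟨p, h⟩ ≠ 0} with hs
  have hwON : Orthonormal ℝ (s.restrict w) := by
    rw [orthonormal_iff_ite]
    rintro ⟨a, ha, hane⟩ ⟨b, hb, hbne⟩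
    have hinner : (inner ℝ (w a) (w b) : ℝ)
        = (σ ⟨a, ha⟩)⁻¹ * ((σ ⟨b, hb⟩)⁻¹
            * (μ ⟨b, hb⟩ * (if (⟨a, ha⟩ : Fin n) = ⟨b, hb⟩ then 1 else 0))) := by
      simp only [hw, dif_pos ha, dif_pos hb]
      rw [real_inner_smul_left, real_inner_smul_right, inner_eq_dot, WithLp.ofLp_toLp, WithLp.ofLp_toLp, hdot]
    change (inner ℝ (w a) (w b) : ℝ) = _
    rw [hinner]
    by_cases hab : (⟨a, ha⟩ : Fin n) = (⟨b, hb⟩ : Fin n)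
    · have hab2 : (a : Fin m) = b := Fin.ext (Fin.mk.inj_iff.mp hab)
      have hab' : (⟨a, ⟨ha, hane⟩⟩ : ↥s) = ⟨b, ⟨hb, hbne⟩⟩ := Subtype.ext hab2
      rw [if_pos hab, if_pos hab']
      subst hab2
      rw [mul_one, ← hσsq]
      field_simp
    · have hab' : (⟨a, ⟨ha, hane⟩⟩ : ↥s) ≠ ⟨b, ⟨hb, hbne⟩⟩ := fun hcon =>
        hab (Fin.mk.inj_iff.mpr (congrArg Fin.val (Subtype.ext_iff.mp hcon)))
      rw [if_neg hab, if_neg hab']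
      ring
  obtain ⟨bb, hbb⟩ := hwON.exists_orthonormalBasis_extension_of_card_eq
    (by simp [finrank_euclideanSpace])
  refine ⟨Matrix.of fun i p => bb p i, V, ?_, hV1, hV2, ?_⟩
  · ext p q
    rw [Matrix.mul_apply, Matrix.one_apply]
    have : ∑ i, (Matrix.of fun i p => bb p i)ᵀ p i * (Matrix.of fun i p => bb p i) i q
        = (inner ℝ (bb p) (bb q) : ℝ) := by
      rw [PiLp.inner_apply]
      simp [RCLike.inner_apply, Matrix.transpose_apply]
      exact Finset.sum_congr rfl fun _ _ => mul_comm _ _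
    rw [this, orthonormal_iff_ite.mp bb.orthonormal]
  · intro j
    have hlt : ((Fin.castLE hmn j : Fin m) : ℕ) < n := by simp
    have hfin : (⟨((Fin.castLE hmn j : Fin m) : ℕ), hlt⟩ : Fin n) = j := Fin.ext (by simp)
    by_cases hj : σ j ≠ 0
    · have hjs : (Fin.castLE hmn j : Fin m) ∈ s := ⟨hlt, by rw [hfin]; exact hj⟩
      have hbbj := hbb _ hjs
      have hwj : w (Fin.castLE hmn j)
          = (σ j)⁻¹ • (WithLp.toLp 2 (X *ᵥ vcol j : Fin m → ℝ) : EuclideanSpace ℝ (Fin m)) := by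
        rw [hw]
        simp only []
        rw [dif_pos hlt, hfin]
      funext i
      have hcol : bb (Fin.castLE hmn j) i = (σ j)⁻¹ * (X *ᵥ vcol j) i := by
        rw [hbbj, hwj]; rfl
      rw [Matrix.of_apply, hcol]
      field_simp
      rfl
    · push_neg at hj
      have hμ0 : μ j = 0 := by rw [← hσsq, hj, mul_zero]
      have hXv : X *ᵥ vcol j = 0 := by
        have hd := hdot j j
        rw [if_pos rfl, hμ0, mul_one] at hd
        funext i
        have hnn : ∀ i ∈ Finset.univ, 0 ≤ (X *ᵥ vcol j) i * (X *ᵥ vcol j) i :=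
          fun i _ => mul_self_nonneg _
        have := (Finset.sum_eq_zero_iff_of_nonneg hnn).mp hd i (Finset.mem_univ i)
        exact mul_self_eq_zero.mp this
      rw [hXv]
      funext i
      simp [hj]

end Paper

theorem ds_bound {ι : Type*} [Fintype ι] [DecidableEq ι] (f g : ι → ℝ) (hfg : Monovary f g)
    (d : Matrix ι ι ℝ) (hd : d ∈ doublyStochastic ℝ ι) :
    ∑ i, ∑ j, f i * g j * d i j ≤ ∑ i, f i * g i := by
  set φ : Matrix ι ι ℝ → ℝ := fun D => ∑ i, ∑ j, f i * g j * D i j with hφ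
  have hconv : ConvexOn ℝ Set.univ φ := by
    refine ⟨convex_univ, fun x _ y _ a b ha hb hab => ?_⟩
    simp only [hφ, Matrix.add_apply, Matrix.smul_apply, smul_eq_mul, Finset.mul_sum,
      ← Finset.sum_add_distrib]
    apply le_of_eq
    refine Finset.sum_congr rfl fun i _ => Finset.sum_congr rfl fun j _ => by ring
  have hd' : d ∈ convexHull ℝ {P | ∃ σ : Equiv.Perm ι, σ.permMatrix ℝ = P} := by
    rw [← doublyStochastic_eq_convexHull_permMatrix]; exact hd
  obtain ⟨P, ⟨σ, rfl⟩, hP⟩ := hconv.exists_ge_of_mem_convexHull (Set.subset_univ _) hd'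
  refine hP.trans ?_
  have : φ (σ.permMatrix ℝ) = ∑ i, f i * g (σ i) := by
    simp only [hφ]
    apply Finset.sum_congr rfl; intro i _
    have hpm : ∀ j, f i * g j * σ.permMatrix ℝ i j = if j = σ i then f i * g j else 0 := by
      intro j
      simp only [Equiv.Perm.permMatrix, PEquiv.toMatrix_apply, Equiv.toPEquiv_apply,
        Option.mem_def, Option.some.injEq, eq_comm]
      split <;> simp_all
    simp only [hpm, Finset.sum_ite_eq', Finset.mem_univ, if_true]
  rw [this]
  have h2 := hfg.symm.sum_comp_perm_mul_le_sum_mul (σ := σ)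
  calc ∑ i, f i * g (σ i) = ∑ i, g (σ i) * f i := by simp [mul_comm]
    _ ≤ ∑ i, g i * f i := h2
    _ = ∑ i, f i * g i := by simp [mul_comm]

theorem subds_bound {n : ℕ} (f g : Fin n → ℝ) (hf : Antitone f) (hg : Antitone g)
    (hf0 : ∀ i, 0 ≤ f i) (hg0 : ∀ i, 0 ≤ g i) (d : Matrix (Fin n) (Fin n) ℝ)
    (hd0 : ∀ i j, 0 ≤ d i j) (hrow : ∀ i, ∑ j, d i j ≤ 1) (hcol : ∀ j, ∑ i, d i j ≤ 1) :
    ∑ i, ∑ j, f i * g j * d i j ≤ ∑ i, f i * g i := by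
  set D : Matrix (Fin n ⊕ Fin n) (Fin n ⊕ Fin n) ℝ :=
    Matrix.fromBlocks d (Matrix.diagonal fun i => 1 - ∑ l, d i l)
      (Matrix.diagonal fun j => 1 - ∑ l, d l j) dᵀ with hD
  have hDds : D ∈ doublyStochastic ℝ (Fin n ⊕ Fin n) := by
    rw [mem_doublyStochastic_iff_sum]
    refine ⟨?_, ?_, ?_⟩
    · rintro (i | i) (j | j) <;>
        simp only [hD, Matrix.fromBlocks_apply₁₁, Matrix.fromBlocks_apply₁₂,
          Matrix.fromBlocks_apply₂₁, Matrix.fromBlocks_apply₂₂, Matrix.diagonal_apply,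
          Matrix.transpose_apply]
      · exact hd0 i j
      · split
        · linarith [hrow i]
        · exact le_refl 0
      · split
        · next h => subst h; linarith [hcol i]
        · exact le_refl 0
      · exact hd0 j i
    · rintro (i | i) <;>
        · rw [Fintype.sum_sum_type]
          simp only [hD, Matrix.fromBlocks_apply₁₁, Matrix.fromBlocks_apply₁₂,
            Matrix.fromBlocks_apply₂₁, Matrix.fromBlocks_apply₂₂, Matrix.transpose_apply,
            Matrix.diagonal_apply, Finset.sum_ite_eq, Finset.mem_univ, if_true]
          ring
    · rintro (j | j) <;>
        · rw [Fintype.sum_sum_type]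
          simp only [hD, Matrix.fromBlocks_apply₁₁, Matrix.fromBlocks_apply₁₂,
            Matrix.fromBlocks_apply₂₁, Matrix.fromBlocks_apply₂₂, Matrix.transpose_apply,
            Matrix.diagonal_apply, Finset.sum_ite_eq', Finset.mem_univ, if_true]
          ring
  set F : Fin n ⊕ Fin n → ℝ := Sum.elim f 0 with hF
  set G : Fin n ⊕ Fin n → ℝ := Sum.elim g 0 with hG
  have hmono : Monovary F G := by
    rintro (i | i) (j | j) hij <;>
      simp only [hF, hG, Sum.elim_inl, Sum.elim_inr, Pi.zero_apply] at *
    · have hji : ¬ i ≤ j := fun hh => absurd (hg hh) (not_le.2 hij)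
      exact hf (not_le.1 hji).le
    · exact absurd hij (not_lt.2 (hg0 i))
    · exact hf0 j
    · exact absurd hij (lt_irrefl 0)
  have key := ds_bound F G hmono D hDds
  have e1 : ∑ a, ∑ b, F a * G b * D a b = ∑ i, ∑ j, f i * g j * d i j := by
    rw [Fintype.sum_sum_type]
    have h2 : ∀ i : Fin n, ∑ b, F (Sum.inl i) * G b * D (Sum.inl i) b
        = ∑ j, f i * g j * d i j := by
      intro i
      rw [Fintype.sum_sum_type]
      simp [hF, hG, hD]
    have h3 : ∀ i : Fin n, ∑ b, F (Sum.inr i) * G b * D (Sum.inr i) b = 0 := by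
      intro i
      apply Finset.sum_eq_zero
      intro b _
      simp [hF]
    rw [Finset.sum_congr rfl fun i _ => h2 i, Finset.sum_congr rfl fun i _ => h3 i]
    simp
  have e2 : ∑ a, F a * G a = ∑ i, f i * g i := by
    rw [Fintype.sum_sum_type]; simp [hF, hG]
  rw [e1, e2] at key
  exact key


namespace Paper

lemma sum4_swap {p q r t : ℕ} (f : Fin p → Fin q → Fin r → Fin t → ℝ) :
    ∑ i, ∑ j, ∑ a, ∑ b, f i j a b = ∑ a, ∑ b, ∑ i, ∑ j, f i j a b := by
  calc ∑ i, ∑ j, ∑ a, ∑ b, f i j a b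
      = ∑ i, ∑ a, ∑ j, ∑ b, f i j a b :=
        Finset.sum_congr rfl fun i _ => Finset.sum_comm
    _ = ∑ a, ∑ i, ∑ j, ∑ b, f i j a b := Finset.sum_comm
    _ = ∑ a, ∑ i, ∑ b, ∑ j, f i j a b :=
        Finset.sum_congr rfl fun a _ => Finset.sum_congr rfl fun i _ => Finset.sum_comm
    _ = ∑ a, ∑ b, ∑ i, ∑ j, f i j a b :=
        Finset.sum_congr rfl fun a _ => Finset.sum_comm

lemma vonNeumann {m n : ℕ} (hmn : n ≤ m) (X Y : Mat m n) :
    finner X Y ≤ vinner (svals X) (svals Y) := by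
  classical
  obtain ⟨U, V, hU, hV1, hV2, hcolX⟩ := exists_svd hmn X
  obtain ⟨P, Q, hP, hQ1, hQ2, hcolY⟩ := exists_svd hmn Y
  set σ : Fin n → ℝ := svals X with hσ
  set γ : Fin n → ℝ := svals Y with hγ
  set cl : Fin n → Fin m := Fin.castLE hmn with hcl
  have hent : ∀ (Z : Mat m n) (W : Matrix (Fin m) (Fin m) ℝ) (R : Matrix (Fin n) (Fin n) ℝ)
      (τ : Fin n → ℝ), R * Rᵀ = 1 →
      (∀ j : Fin n, Z *ᵥ (fun t => R t j) = fun i => τ j * W i (cl j)) →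
      ∀ i j, Z i j = ∑ a, τ a * W i (cl a) * R j a := by
    intro Z W R τ hR2 hcols i j
    have h0 : Z = (Z * R) * Rᵀ := by
      rw [Matrix.mul_assoc, hR2, Matrix.mul_one]
    conv_lhs => rw [h0]
    rw [Matrix.mul_apply]
    refine Finset.sum_congr rfl fun a _ => ?_
    have h1 : (Z * R) i a = (Z *ᵥ (fun t => R t a)) i := by
      rw [Matrix.mul_apply, Matrix.mulVec, dotProduct]
    rw [h1, hcols a, Matrix.transpose_apply]
  have hXent := hent X U V σ hV2 hcolX
  have hYent := hent Y P Q γ hQ2 hcolY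
  set M : Fin n → Fin n → ℝ := fun a b => ∑ i, U i (cl a) * P i (cl b) with hM
  set N : Fin n → Fin n → ℝ := fun a b => ∑ t, V t a * Q t b with hN
  have key : finner X Y = ∑ a, ∑ b, σ a * γ b * (M a b * N a b) := by
    calc finner X Y
        = ∑ i, ∑ j, ∑ a, ∑ b, (σ a * U i (cl a) * V j a) * (γ b * P i (cl b) * Q j b) := by
          refine Finset.sum_congr rfl fun i _ => Finset.sum_congr rfl fun j _ => ?_
          rw [hXent i j, hYent i j, Finset.sum_mul_sum]
      _ = ∑ a, ∑ b, ∑ i, ∑ j, (σ a * U i (cl a) * V j a) * (γ b * P i (cl b) * Q j b) :=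
          sum4_swap _
      _ = ∑ a, ∑ b, σ a * γ b * (M a b * N a b) := by
          refine Finset.sum_congr rfl fun a _ => Finset.sum_congr rfl fun b _ => ?_
          rw [hM, hN]
          simp only []
          rw [Finset.sum_mul_sum, Finset.mul_sum]
          refine Finset.sum_congr rfl fun i _ => ?_
          rw [Finset.mul_sum]
          refine Finset.sum_congr rfl fun j _ => ?_
          ring
  have hUUt : U * Uᵀ = 1 := mul_eq_one_comm.mp hU
  have hPPt : P * Pᵀ = 1 := mul_eq_one_comm.mp hP
  have hVVt := hV2
  have hQQt := hQ2
  -- K := Uᵀ * P, row/col square sums 1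
  have sq_rowsum : ∀ (A B : Matrix (Fin m) (Fin m) ℝ), Aᵀ * A = 1 → A * Aᵀ = 1 →
      Bᵀ * B = 1 → B * Bᵀ = 1 → ∀ p : Fin m,
      (∑ q, ((Aᵀ * B) p q)^2 = 1) ∧ (∑ q, ((Aᵀ * B) q p)^2 = 1) := by
    intro A B hA1 hA2 hB1 hB2 p
    constructor
    · have h1 : ∑ q, ((Aᵀ * B) p q)^2 = ((Aᵀ * B) * (Aᵀ * B)ᵀ) p p := by
        rw [Matrix.mul_apply]
        exact Finset.sum_congr rfl fun q _ => by rw [Matrix.transpose_apply, sq]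
      rw [h1]
      have : (Aᵀ * B) * (Aᵀ * B)ᵀ = 1 := by
        rw [Matrix.transpose_mul, Matrix.transpose_transpose,
          Matrix.mul_assoc, ← Matrix.mul_assoc B, hB2, Matrix.one_mul, hA1]
      rw [this, Matrix.one_apply_eq]
    · have h1 : ∑ q, ((Aᵀ * B) q p)^2 = ((Aᵀ * B)ᵀ * (Aᵀ * B)) p p := by
        rw [Matrix.mul_apply]
        exact Finset.sum_congr rfl fun q _ => by rw [Matrix.transpose_apply, sq]
      rw [h1]
      have : (Aᵀ * B)ᵀ * (Aᵀ * B) = 1 := by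
        rw [Matrix.transpose_mul, Matrix.transpose_transpose,
          Matrix.mul_assoc, ← Matrix.mul_assoc A, hA2, Matrix.one_mul, hB1]
      rw [this, Matrix.one_apply_eq]
  have hMK : ∀ a b, M a b = (Uᵀ * P) (cl a) (cl b) := by
    intro a b
    rw [Matrix.mul_apply, hM]
    exact Finset.sum_congr rfl fun i _ => by rw [Matrix.transpose_apply]
  have hNL : ∀ a b, N a b = (Vᵀ * Q) a b := by
    intro a b
    rw [Matrix.mul_apply, hN]
    exact Finset.sum_congr rfl fun t _ => by rw [Matrix.transpose_apply]
  have hMrow : ∀ a, ∑ b, (M a b)^2 ≤ 1 := by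
    intro a
    have h1 : ∑ b, (M a b)^2 = ∑ q ∈ Finset.univ.map (Fin.castLEEmb hmn),
        ((Uᵀ * P) (cl a) q)^2 := by
      rw [Finset.sum_map]
      exact Finset.sum_congr rfl fun b _ => by rw [hMK]; rfl
    rw [h1]
    have h2 := (sq_rowsum U P hU hUUt hP hPPt (cl a)).1
    calc ∑ q ∈ Finset.univ.map (Fin.castLEEmb hmn), ((Uᵀ * P) (cl a) q)^2
        ≤ ∑ q, ((Uᵀ * P) (cl a) q)^2 :=
          Finset.sum_le_sum_of_subset_of_nonneg (Finset.subset_univ _)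
            (fun q _ _ => sq_nonneg _)
      _ = 1 := h2
  have hMcol : ∀ b, ∑ a, (M a b)^2 ≤ 1 := by
    intro b
    have h1 : ∑ a, (M a b)^2 = ∑ q ∈ Finset.univ.map (Fin.castLEEmb hmn),
        ((Uᵀ * P) q (cl b))^2 := by
      rw [Finset.sum_map]
      exact Finset.sum_congr rfl fun a _ => by rw [hMK]; rfl
    rw [h1]
    have h2 := (sq_rowsum U P hU hUUt hP hPPt (cl b)).2
    calc ∑ q ∈ Finset.univ.map (Fin.castLEEmb hmn), ((Uᵀ * P) q (cl b))^2
        ≤ ∑ q, ((Uᵀ * P) q (cl b))^2 :=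
          Finset.sum_le_sum_of_subset_of_nonneg (Finset.subset_univ _)
            (fun q _ _ => sq_nonneg _)
      _ = 1 := h2
  have sq_rowsum' : ∀ (A B : Matrix (Fin n) (Fin n) ℝ), Aᵀ * A = 1 → A * Aᵀ = 1 →
      Bᵀ * B = 1 → B * Bᵀ = 1 → ∀ p : Fin n,
      (∑ q, ((Aᵀ * B) p q)^2 = 1) ∧ (∑ q, ((Aᵀ * B) q p)^2 = 1) := by
    intro A B hA1 hA2 hB1 hB2 p
    constructor
    · have h1 : ∑ q, ((Aᵀ * B) p q)^2 = ((Aᵀ * B) * (Aᵀ * B)ᵀ) p p := by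
        rw [Matrix.mul_apply]
        exact Finset.sum_congr rfl fun q _ => by rw [Matrix.transpose_apply, sq]
      rw [h1]
      have : (Aᵀ * B) * (Aᵀ * B)ᵀ = 1 := by
        rw [Matrix.transpose_mul, Matrix.transpose_transpose,
          Matrix.mul_assoc, ← Matrix.mul_assoc B, hB2, Matrix.one_mul, hA1]
      rw [this, Matrix.one_apply_eq]
    · have h1 : ∑ q, ((Aᵀ * B) q p)^2 = ((Aᵀ * B)ᵀ * (Aᵀ * B)) p p := by
        rw [Matrix.mul_apply]
        exact Finset.sum_congr rfl fun q _ => by rw [Matrix.transpose_apply, sq]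
      rw [h1]
      have : (Aᵀ * B)ᵀ * (Aᵀ * B) = 1 := by
        rw [Matrix.transpose_mul, Matrix.transpose_transpose,
          Matrix.mul_assoc, ← Matrix.mul_assoc A, hA2, Matrix.one_mul, hB1]
      rw [this, Matrix.one_apply_eq]
  have hNrow : ∀ a, ∑ b, (N a b)^2 ≤ 1 := by
    intro a
    have h2 := (sq_rowsum' V Q hV1 hV2 hQ1 hQ2 a).1
    refine le_of_eq ?_
    rw [← h2]
    exact Finset.sum_congr rfl fun b _ => by rw [hNL]
  have hNcol : ∀ b, ∑ a, (N a b)^2 ≤ 1 := by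
    intro b
    have h2 := (sq_rowsum' V Q hV1 hV2 hQ1 hQ2 b).2
    refine le_of_eq ?_
    rw [← h2]
    exact Finset.sum_congr rfl fun a _ => by rw [hNL]
  -- two applications of subds_bound
  have hb1 : ∑ a, ∑ b, σ a * γ b * (M a b)^2 ≤ ∑ a, σ a * γ a :=
    subds_bound σ γ (svals_antitone X) (svals_antitone Y) (svals_nonneg X) (svals_nonneg Y)
      (fun a b => (M a b)^2) (fun a b => sq_nonneg _) hMrow hMcol
  have hb2 : ∑ a, ∑ b, σ a * γ b * (N a b)^2 ≤ ∑ a, σ a * γ a :=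
    subds_bound σ γ (svals_antitone X) (svals_antitone Y) (svals_nonneg X) (svals_nonneg Y)
      (fun a b => (N a b)^2) (fun a b => sq_nonneg _) hNrow hNcol
  rw [key]
  have step : ∑ a, ∑ b, σ a * γ b * (M a b * N a b)
      ≤ ∑ a, ∑ b, (σ a * γ b * (M a b)^2 + σ a * γ b * (N a b)^2) / 2 := by
    refine Finset.sum_le_sum fun a _ => Finset.sum_le_sum fun b _ => ?_
    have hnn : 0 ≤ σ a * γ b := mul_nonneg (svals_nonneg X a) (svals_nonneg Y b)
    nlinarith [sq_nonneg (M a b - N a b)]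
  refine step.trans ?_
  have e1 : ∀ a : Fin n, ∑ b, (σ a * γ b * (M a b)^2 + σ a * γ b * (N a b)^2) / 2
      = (∑ b, σ a * γ b * (M a b)^2) / 2 + (∑ b, σ a * γ b * (N a b)^2) / 2 := by
    intro a
    rw [Finset.sum_div, Finset.sum_div, ← Finset.sum_add_distrib]
    exact Finset.sum_congr rfl fun b _ => by ring
  have e2 : ∑ a, ∑ b, (σ a * γ b * (M a b)^2 + σ a * γ b * (N a b)^2) / 2
      = (∑ a, ∑ b, σ a * γ b * (M a b)^2) / 2 + (∑ a, ∑ b, σ a * γ b * (N a b)^2) / 2 := by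
    rw [Finset.sum_congr rfl fun a _ => e1 a, Finset.sum_add_distrib,
      Finset.sum_div, Finset.sum_div]
  rw [e2]
  have hv : vinner σ γ = ∑ a, σ a * γ a := rfl
  rw [hv]
  linarith

end Paper


end MirskyAux


/-- The singular value map is 1-Lipschitz: `‖σ(X) − σ(Y)‖ ≤ ‖X − Y‖`. -/
theorem stmt1 {m n : ℕ} (hmn : n ≤ m) (X Y : Mat m n) :
    vnorm (svals X - svals Y) ≤ fnorm (X - Y) := by
  rw [vnorm, fnorm]
  apply Real.sqrt_le_sqrt
  have hv : vinner (svals X - svals Y) (svals X - svals Y)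
      = (∑ i, svals X i * svals X i) + (∑ i, svals Y i * svals Y i)
        - 2 * vinner (svals X) (svals Y) := by
    rw [vinner, vinner]
    have h1 : ∀ i, (svals X - svals Y) i * (svals X - svals Y) i
        = svals X i * svals X i + svals Y i * svals Y i - 2 * (svals X i * svals Y i) := by
      intro i
      simp only [Pi.sub_apply]
      ring
    rw [Finset.sum_congr rfl fun i _ => h1 i, Finset.sum_sub_distrib,
      Finset.sum_add_distrib, ← Finset.mul_sum]
  have hf : finner (X - Y) (X - Y) = finner X X + finner Y Y - 2 * finner X Y := by
    rw [finner, finner, finner, finner]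
    have h1 : ∀ i j, (X - Y) i j * (X - Y) i j
        = X i j * X i j + Y i j * Y i j - 2 * (X i j * Y i j) := by
      intro i j
      simp only [Matrix.sub_apply]
      ring
    have h2 : ∀ i, ∑ j, (X - Y) i j * (X - Y) i j
        = (∑ j, X i j * X i j) + (∑ j, Y i j * Y i j) - 2 * ∑ j, X i j * Y i j := by
      intro i
      rw [Finset.sum_congr rfl fun j _ => h1 i j, Finset.sum_sub_distrib,
        Finset.sum_add_distrib, ← Finset.mul_sum]
    rw [Finset.sum_congr rfl fun i _ => h2 i, Finset.sum_sub_distrib,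
      Finset.sum_add_distrib, ← Finset.mul_sum]
  rw [hv, hf]
  have h3 := vonNeumann hmn X Y
  have h4 := sum_sq_svals X
  have h5 := sum_sq_svals Y
  linarith
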